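/- Let q be a real number with 0 < q < 1. There exists a constant c > 0, depending only on q, such that for all real numbers a, b one has | |a+b|^q - |a|^q | ≤ c·|b|^q, and moreover, for all real a ≠ 0 and all real b, | |a+b|^q - |a|^q | ≤ c·|a|^{q-1}·|b| (hence the left-hand side is bounded by c·min{|b|^q, |a|^{q-1}|b|} whenever a ≠ 0). -/

import Mathlib

lemma aux_add_rpow {q : ℝ} (hq0 : 0 < q) (hq1 : q ≤ 1) {x y : ℝ} (hx : 0 ≤ x) (hy : 0 ≤ y) :
    (x + y) ^ q ≤ x ^ q + y ^ q := by
  have h := NNReal.rpow_add_le_add_rpow x.toNNReal y.toNNReal hq0.le hq1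
  have h2 := NNReal.coe_le_coe.2 h
  push_cast [NNReal.coe_rpow, Real.coe_toNNReal x hx, Real.coe_toNNReal y hy] at h2
  exact h2

lemma aux_sub_rpow {q : ℝ} (hq0 : 0 < q) (hq1 : q ≤ 1) {x y : ℝ} (hx : 0 ≤ x) (hy : 0 ≤ y) :
    |x ^ q - y ^ q| ≤ |x - y| ^ q := by
  have key : ∀ u v : ℝ, 0 ≤ u → 0 ≤ v → v ≤ u → u ^ q - v ^ q ≤ |u - v| ^ q := by
    intro u v hu hv huv
    have h1 : u ^ q ≤ (u - v) ^ q + v ^ q := by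
      have := aux_add_rpow hq0 hq1 (x := u - v) (y := v) (by linarith) hv
      simpa using this
    rw [abs_of_nonneg (by linarith)]
    linarith
  rcases le_total x y with h | h
  · have hmono : x ^ q ≤ y ^ q := Real.rpow_le_rpow hx h hq0.le
    have hnn : (0:ℝ) ≤ |x - y| ^ q := Real.rpow_nonneg (abs_nonneg _) q
    have hk := key y x hy hx h
    rw [abs_sub_comm y x] at hk
    exact abs_le.2 ⟨by linarith, by linarith⟩
  · have hmono : y ^ q ≤ x ^ q := Real.rpow_le_rpow hy h hq0.le
    have hnn : (0:ℝ) ≤ |x - y| ^ q := Real.rpow_nonneg (abs_nonneg _) q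
    exact abs_le.2 ⟨by linarith, key x y hx hy h⟩

lemma aux_bernoulli {q : ℝ} (hq0 : 0 < q) (hq1 : q ≤ 1) {x y : ℝ} (hy : 0 < y) (hxy : y ≤ x) :
    x ^ q ≤ y ^ q + q * y ^ (q - 1) * (x - y) := by
  set s := (x - y) / y with hs_def
  have hs : 0 ≤ s := div_nonneg (by linarith) hy.le
  have hber : (1 + s) ^ q ≤ 1 + q * s :=
    rpow_one_add_le_one_add_mul_self (by linarith) hq0.le hq1
  have hx_eq : x = y * (1 + s) := by
    rw [hs_def, mul_add, mul_div_assoc', mul_div_right_comm, div_self hy.ne', one_mul]; ring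
  have hyq : (0:ℝ) < y ^ q := Real.rpow_pos_of_pos hy q
  calc x ^ q = (y * (1 + s)) ^ q := by rw [← hx_eq]
    _ = y ^ q * (1 + s) ^ q := Real.mul_rpow hy.le (by linarith)
    _ ≤ y ^ q * (1 + q * s) := by nlinarith
    _ = y ^ q + q * (y ^ q / y) * (x - y) := by field_simp [hs_def]; linear_combination (-q) * hx_eq
    _ = y ^ q + q * y ^ (q - 1) * (x - y) := by
        rw [← Real.rpow_sub_one hy.ne']

lemma aux_min {q : ℝ} (hq0 : 0 < q) (hq1 : q ≤ 1) {m x y : ℝ} (hm : 0 < m) (hmx : m ≤ x)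
    (hmy : m ≤ y) : |x ^ q - y ^ q| ≤ q * m ^ (q - 1) * |x - y| := by
  have key : ∀ u v : ℝ, m ≤ u → m ≤ v → v ≤ u → u ^ q - v ^ q ≤ q * m ^ (q - 1) * (u - v) := by
    intro u v hu hv huv
    have h1 := aux_bernoulli hq0 hq1 (lt_of_lt_of_le hm hv) huv
    have h2 : v ^ (q - 1) ≤ m ^ (q - 1) :=
      Real.rpow_le_rpow_of_nonpos hm hv (by linarith)
    have h3 : q * v ^ (q - 1) * (u - v) ≤ q * m ^ (q - 1) * (u - v) :=
      mul_le_mul_of_nonneg_right (mul_le_mul_of_nonneg_left h2 hq0.le) (by linarith)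
    linarith
  rcases le_total x y with h | h
  · have hmono : x ^ q ≤ y ^ q :=
      Real.rpow_le_rpow (by linarith) h hq0.le
    have hnn : 0 ≤ q * m ^ (q - 1) * |x - y| := by positivity
    have hk := key y x hmy hmx h
    rw [abs_sub_comm x y, abs_of_nonneg (by linarith : (0:ℝ) ≤ y - x)]
    exact abs_le.2 ⟨by linarith, by linarith⟩
  · have hmono : y ^ q ≤ x ^ q :=
      Real.rpow_le_rpow (by linarith) h hq0.le
    have hk := key x y hmx hmy h
    rw [abs_of_nonneg (by linarith : (0:ℝ) ≤ x - y)]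
    have hnn : 0 ≤ q * m ^ (q - 1) * (x - y) := by
      have : (0:ℝ) ≤ m ^ (q - 1) := Real.rpow_nonneg hm.le _
      nlinarith
    exact abs_le.2 ⟨by linarith, hk⟩

/-- Lemma 2.2 of the paper, case `0 < q < 1`: there is a constant `c > 0`,
depending only on `q`, such that `||a+b|^q - |a|^q| ≤ c * |b|^q` for all reals,
and `||a+b|^q - |a|^q| ≤ c * |a|^(q-1) * |b|` whenever `a ≠ 0`. -/
theorem stmt_0 (q : ℝ) (hq0 : 0 < q) (hq1 : q < 1) :
    ∃ c : ℝ, 0 < c ∧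
      (∀ a b : ℝ, |(|a + b| ^ q - |a| ^ q)| ≤ c * |b| ^ q) ∧
      (∀ a b : ℝ, a ≠ 0 → |(|a + b| ^ q - |a| ^ q)| ≤ c * |a| ^ (q - 1) * |b|) := by
  refine ⟨(2:ℝ) ^ (1 - q), Real.rpow_pos_of_pos two_pos _, ?_, ?_⟩
  · intro a b
    have hc : (1:ℝ) ≤ (2:ℝ) ^ (1 - q) :=
      Real.one_le_rpow one_le_two (by linarith)
    have h1 : |(|a + b| ^ q - |a| ^ q)| ≤ |(|a + b| - |a|)| ^ q :=
      aux_sub_rpow hq0 hq1.le (abs_nonneg _) (abs_nonneg _)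
    have h2 : |(|a + b| - |a|)| ≤ |b| := by
      have := abs_abs_sub_abs_le_abs_sub (a + b) a
      simpa using this
    have h3 : |(|a + b| - |a|)| ^ q ≤ |b| ^ q :=
      Real.rpow_le_rpow (abs_nonneg _) h2 hq0.le
    have h4 : (0:ℝ) ≤ |b| ^ q := Real.rpow_nonneg (abs_nonneg _) q
    nlinarith
  · intro a b ha
    have hap : (0:ℝ) < |a| := abs_pos.2 ha
    have hhalf : (0:ℝ) < |a| / 2 := by linarith
    have hkey : (|a| / 2) ^ (q - 1) = (2:ℝ) ^ (1 - q) * |a| ^ (q - 1) := by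
      rw [div_eq_mul_inv, Real.mul_rpow hap.le (by norm_num), Real.inv_rpow (by norm_num),
        ← Real.rpow_neg (by norm_num), neg_sub]
      ring
    have hdiff : |(|a + b| - |a|)| ≤ |b| := by
      have := abs_abs_sub_abs_le_abs_sub (a + b) a
      simpa using this
    rcases le_total (|b|) (|a| / 2) with hb | hb
    · -- |b| ≤ |a|/2 : mean value bound
      have hx : |a| / 2 ≤ |a + b| := by
        have h := abs_le.1 hdiff
        linarith [h.1]
      have hy : |a| / 2 ≤ |a| := by linarith
      have h := aux_min hq0 hq1.le hhalf hx hy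
      have hmq : (0:ℝ) ≤ (|a| / 2) ^ (q - 1) := Real.rpow_nonneg hhalf.le _
      have h5 : q * (|a| / 2) ^ (q - 1) * |(|a + b| - |a|)| ≤
          q * (|a| / 2) ^ (q - 1) * |b| :=
        mul_le_mul_of_nonneg_left hdiff (by positivity)
      have h6 : q * (|a| / 2) ^ (q - 1) * |b| ≤ (|a| / 2) ^ (q - 1) * |b| := by
        nlinarith [mul_nonneg hmq (abs_nonneg b)]
      calc |(|a + b| ^ q - |a| ^ q)| ≤ q * (|a| / 2) ^ (q - 1) * |(|a + b| - |a|)| := h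
        _ ≤ (|a| / 2) ^ (q - 1) * |b| := by linarith
        _ = (2:ℝ) ^ (1 - q) * |a| ^ (q - 1) * |b| := by rw [hkey]
    · -- |a|/2 ≤ |b|
      have hbp : (0:ℝ) < |b| := lt_of_lt_of_le hhalf hb
      have h1 : |(|a + b| ^ q - |a| ^ q)| ≤ |(|a + b| - |a|)| ^ q :=
        aux_sub_rpow hq0 hq1.le (abs_nonneg _) (abs_nonneg _)
      have h3 : |(|a + b| - |a|)| ^ q ≤ |b| ^ q :=
        Real.rpow_le_rpow (abs_nonneg _) hdiff hq0.le
      have h4 : |b| ^ q = |b| ^ (q - 1) * |b| := by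
        rw [Real.rpow_sub_one hbp.ne']
        field_simp
      have h5 : |b| ^ (q - 1) ≤ (|a| / 2) ^ (q - 1) :=
        Real.rpow_le_rpow_of_nonpos hhalf hb (by linarith)
      calc |(|a + b| ^ q - |a| ^ q)| ≤ |b| ^ q := le_trans h1 h3
        _ = |b| ^ (q - 1) * |b| := h4
        _ ≤ (|a| / 2) ^ (q - 1) * |b| := mul_le_mul_of_nonneg_right h5 (abs_nonneg b)
        _ = (2:ℝ) ^ (1 - q) * |a| ^ (q - 1) * |b| := by rw [hkey]
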